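/- Let X ⊆ R^d be closed convex, F monotone and L-Lipschitz, x* a solution to the VI on X, and let {x^k, x̃^k} be projected PEG iterates with γ ≤ 1/(4L). Define Φ_k = ‖x^k - x*‖² + (1/16)‖x̃^{k-1} - x̃^{k-2}‖² + ((3k + 32)/24)Ψ_k, where Ψ_k = ‖x^k - x^{k-1}‖² + ‖x^k - x^{k-1} - 2γ(F(x^k) - F(x̃^{k-1}))‖². Then Φ_{k+1} ≤ Φ_k for all k ≥ 2. -/
import Mathlib


open scoped RealInnerProductSpace

/-- `IsProjOn X z p` means `p` is the Euclidean projection of `z` onto `X`: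
`p ∈ X` and `p` minimizes the distance to `z` over `X`. -/
def IsProjOn {d : ℕ} (X : Set (EuclideanSpace ℝ (Fin d))) (z p : EuclideanSpace ℝ (Fin d)) : Prop :=
  p ∈ X ∧ ∀ y ∈ X, ‖p - z‖ ≤ ‖y - z‖


private lemma isProjOn_inner_le {d : ℕ} {X : Set (EuclideanSpace ℝ (Fin d))}
    (hXconv : Convex ℝ X) {z p : EuclideanSpace ℝ (Fin d)}
    (hp : IsProjOn X z p) {y : EuclideanSpace ℝ (Fin d)} (hy : y ∈ X) :
    0 ≤ ⟪p - z, y - p⟫ := by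
  by_contra hcon
  push_neg at hcon
  have hyp : (0:ℝ) < ‖y - p‖ ^ 2 := by
    rcases eq_or_ne y p with h | h
    · exfalso; rw [h] at hcon; simp at hcon
    · have h2 : 0 < ‖y - p‖ := norm_pos_iff.mpr (sub_ne_zero.mpr h)
      positivity
  set c : ℝ := ⟪p - z, y - p⟫ with hcdef
  set n : ℝ := ‖y - p‖ ^ 2 with hndef
  set t : ℝ := min 1 (-c / n) with htdef
  have ht0 : 0 < t := lt_min one_pos (div_pos (by linarith) hyp)
  have ht1 : t ≤ 1 := min_le_left _ _
  have htn : t * n ≤ -c := by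
    have h1 : t ≤ -c / n := min_le_right _ _
    calc t * n ≤ (-c / n) * n := by nlinarith
    _ = -c := div_mul_cancel₀ _ (ne_of_gt hyp)
  have hqX : p + t • (y - p) ∈ X := by
    have heq : p + t • (y - p) = (1 - t) • p + t • y := by
      rw [smul_sub, sub_smul, one_smul]; abel
    rw [heq]
    exact hXconv hp.1 hy (by linarith) ht0.le (by ring)
  have hle := hp.2 _ hqX
  have hsq : ‖p + t • (y - p) - z‖ ^ 2 = ‖p - z‖ ^ 2 + 2 * (t * c) + t ^ 2 * n := by
    have h3 : p + t • (y - p) - z = (p - z) + t • (y - p) := by abel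
    rw [h3, norm_add_sq_real, real_inner_smul_right, norm_smul, Real.norm_eq_abs,
      abs_of_pos ht0, mul_pow, hndef]
  have hle2 : ‖p - z‖ ^ 2 ≤ ‖p + t • (y - p) - z‖ ^ 2 :=
    pow_le_pow_left₀ (norm_nonneg _) hle 2
  rw [hsq] at hle2
  nlinarith [hle2, htn, ht0, hcon]

set_option maxHeartbeats 4000000 in
theorem proj_peg_lyapunov_decrease (d : ℕ) (X : Set (EuclideanSpace ℝ (Fin d)))
    (hX : X.Nonempty) (hXc : IsClosed X) (hXconv : Convex ℝ X)
    (F : EuclideanSpace ℝ (Fin d) → EuclideanSpace ℝ (Fin d)) (L γ : ℝ)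
    (hL : 0 < L)
    (hmono : ∀ x y, 0 ≤ ⟪F x - F y, x - y⟫)
    (hLip : ∀ x y, ‖F x - F y‖ ≤ L * ‖x - y‖)
    (hγpos : 0 < γ) (hγ : γ ≤ 1 / (4 * L))
    (xs : EuclideanSpace ℝ (Fin d)) (hxsX : xs ∈ X)
    (hxs : ∀ x ∈ X, 0 ≤ ⟪F xs, x - xs⟫)
    (x xt : ℕ → EuclideanSpace ℝ (Fin d))
    (hx0 : x 0 ∈ X) (hxt0 : xt 0 = x 0)
    (hx1 : IsProjOn X (x 0 - γ • F (x 0)) (x 1))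
    (hxt : ∀ k, 1 ≤ k → IsProjOn X (x k - γ • F (xt (k - 1))) (xt k))
    (hx : ∀ k, 1 ≤ k → IsProjOn X (x k - γ • F (xt k)) (x (k + 1))) :
    ∀ k : ℕ, 2 ≤ k →
      ‖x (k + 1) - xs‖ ^ 2 + (1 / 16) * ‖xt k - xt (k - 1)‖ ^ 2 +
          ((3 * ((k : ℝ) + 1) + 32) / 24) *
            (‖x (k + 1) - x k‖ ^ 2 +
              ‖x (k + 1) - x k - (2 * γ) • (F (x (k + 1)) - F (xt k))‖ ^ 2) ≤
        ‖x k - xs‖ ^ 2 + (1 / 16) * ‖xt (k - 1) - xt (k - 2)‖ ^ 2 +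
          ((3 * (k : ℝ) + 32) / 24) *
            (‖x k - x (k - 1)‖ ^ 2 +
              ‖x k - x (k - 1) - (2 * γ) • (F (x k) - F (xt (k - 1)))‖ ^ 2) := by
  intro k hk
  have hk1 : 1 ≤ k := by omega
  have hk1' : 1 ≤ k - 1 := by omega
  have e1 : k - 1 + 1 = k := by omega
  have e2 : k - 1 - 1 = k - 2 := by omega
  have Hv := hxt (k - 1) hk1'
  rw [e2] at Hv
  have Hb := hx (k - 1) hk1'
  rw [e1] at Hb
  have Hw := hxt k hk1
  have Hc := hx k hk1
  have m_x2 : x k ∈ X := Hb.1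
  have m_t1 : xt (k - 1) ∈ X := Hv.1
  have m_t2 : xt k ∈ X := Hw.1
  have m_x3 : x (k + 1) ∈ X := Hc.1
  have hproj_t1_t2 : 0 ≤ ⟪xt (k - 1) - (x (k - 1) - γ • F (xt (k - 2))), xt k - xt (k - 1)⟫ :=
    isProjOn_inner_le hXconv Hv m_t2
  have hproj_t1_x2 : 0 ≤ ⟪xt (k - 1) - (x (k - 1) - γ • F (xt (k - 2))), x k - xt (k - 1)⟫ :=
    isProjOn_inner_le hXconv Hv m_x2
  have hproj_t1_x3 : 0 ≤ ⟪xt (k - 1) - (x (k - 1) - γ • F (xt (k - 2))), x (k + 1) - xt (k - 1)⟫ :=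
    isProjOn_inner_le hXconv Hv m_x3
  have hproj_t2_x3 : 0 ≤ ⟪xt k - (x k - γ • F (xt (k - 1))), x (k + 1) - xt k⟫ :=
    isProjOn_inner_le hXconv Hw m_x3
  have hproj_x2_t2 : 0 ≤ ⟪x k - (x (k - 1) - γ • F (xt (k - 1))), xt k - x k⟫ :=
    isProjOn_inner_le hXconv Hb m_t2
  have hproj_x2_x3 : 0 ≤ ⟪x k - (x (k - 1) - γ • F (xt (k - 1))), x (k + 1) - x k⟫ :=
    isProjOn_inner_le hXconv Hb m_x3
  have hproj_x3_s : 0 ≤ ⟪x (k + 1) - (x k - γ • F (xt k)), xs - x (k + 1)⟫ :=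
    isProjOn_inner_le hXconv Hc hxsX
  have hproj_x3_t1 : 0 ≤ ⟪x (k + 1) - (x k - γ • F (xt k)), xt (k - 1) - x (k + 1)⟫ :=
    isProjOn_inner_le hXconv Hc m_t1
  have hproj_x3_t2 : 0 ≤ ⟪x (k + 1) - (x k - γ • F (xt k)), xt k - x (k + 1)⟫ :=
    isProjOn_inner_le hXconv Hc m_t2
  have hproj_x3_x2 : 0 ≤ ⟪x (k + 1) - (x k - γ • F (xt k)), x k - x (k + 1)⟫ :=
    isProjOn_inner_le hXconv Hc m_x2
  have nm : ∀ p q : EuclideanSpace ℝ (Fin d), 0 ≤ ⟪γ • F p - γ • F q, p - q⟫ := by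
    intro p q
    rw [← smul_sub, real_inner_smul_left]
    exact mul_nonneg hγpos.le (hmono p q)
  have hγL : γ * L ≤ 1 / 4 := by
    rw [le_div_iff₀ (by linarith : (0:ℝ) < 4 * L)] at hγ
    nlinarith
  have nl : ∀ p q : EuclideanSpace ℝ (Fin d),
      0 ≤ 1 / 16 * ‖p - q‖ ^ 2 - ‖γ • F p - γ • F q‖ ^ 2 := by
    intro p q
    have h1 : ‖γ • F p - γ • F q‖ ≤ 1 / 4 * ‖p - q‖ := by
      rw [← smul_sub, norm_smul, Real.norm_eq_abs, abs_of_pos hγpos]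
      nlinarith [hLip p q, norm_nonneg (p - q), norm_nonneg (F p - F q)]
    nlinarith [mul_self_le_mul_self (norm_nonneg (γ • F p - γ • F q)) h1,
      norm_nonneg (p - q), norm_nonneg (γ • F p - γ • F q)]
  have nv : ∀ y, y ∈ X → 0 ≤ ⟪γ • F xs, y - xs⟫ := by
    intro y hy
    rw [real_inner_smul_left]
    exact mul_nonneg hγpos.le (hxs y hy)
  have hK : (2 : ℝ) ≤ (k : ℝ) := by exact_mod_cast hk
  have hT1 : (0:ℝ) ≤
      (11/8 : ℝ) * ⟪xt (k - 1) - (x (k - 1) - γ • F (xt (k - 2))), x k - xt (k - 1)⟫ +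
      (1/16 : ℝ) * ⟪xt (k - 1) - (x (k - 1) - γ • F (xt (k - 2))), x (k + 1) - xt (k - 1)⟫ +
      (1/16 : ℝ) * ⟪xt (k - 1) - (x (k - 1) - γ • F (xt (k - 2))), xt k - xt (k - 1)⟫ +
      (33/8 : ℝ) * ⟪x k - (x (k - 1) - γ • F (xt (k - 1))), x (k + 1) - x k⟫ +
      (5/4 : ℝ) * ⟪x k - (x (k - 1) - γ • F (xt (k - 1))), xt k - x k⟫ +
      (7/2 : ℝ) * ⟪xt k - (x k - γ • F (xt (k - 1))), x (k + 1) - xt k⟫ +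
      (4 : ℝ) * ⟪x (k + 1) - (x k - γ • F (xt k)), x k - x (k + 1)⟫ +
      (3/2 : ℝ) * ⟪x (k + 1) - (x k - γ • F (xt k)), xt (k - 1) - x (k + 1)⟫ +
      (3/16 : ℝ) * ⟪x (k + 1) - (x k - γ • F (xt k)), xt k - x (k + 1)⟫ +
      (2 : ℝ) * ⟪x (k + 1) - (x k - γ • F (xt k)), xs - x (k + 1)⟫ +
      (79/16 : ℝ) * ⟪γ • F (x k) - γ • F (x (k + 1)), x k - x (k + 1)⟫ +
      (11/8 : ℝ) * ⟪γ • F (x (k + 1)) - γ • F (xt (k - 1)), x (k + 1) - xt (k - 1)⟫ +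
      (3/8 : ℝ) * ⟪γ • F (x (k + 1)) - γ • F (xt k), x (k + 1) - xt k⟫ +
      (2 : ℝ) * ⟪γ • F (xt k) - γ • F xs, xt k - xs⟫ +
      (5/16 : ℝ) * (1 / 16 * ‖x k - xt (k - 1)‖ ^ 2 - ‖γ • F (x k) - γ • F (xt (k - 1))‖ ^ 2) +
      (13/16 : ℝ) * (1 / 16 * ‖x k - xt k‖ ^ 2 - ‖γ • F (x k) - γ • F (xt k)‖ ^ 2) +
      (7/8 : ℝ) * (1 / 16 * ‖x (k + 1) - xt (k - 1)‖ ^ 2 - ‖γ • F (x (k + 1)) - γ • F (xt (k - 1))‖ ^ 2) +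
      (19/2 : ℝ) * (1 / 16 * ‖x (k + 1) - xt k‖ ^ 2 - ‖γ • F (x (k + 1)) - γ • F (xt k)‖ ^ 2) +
      (5/8 : ℝ) * (1 / 16 * ‖xt (k - 2) - xt (k - 1)‖ ^ 2 - ‖γ • F (xt (k - 2)) - γ • F (xt (k - 1))‖ ^ 2) +
      (1/16 : ℝ) * (1 / 16 * ‖xt (k - 2) - xt k‖ ^ 2 - ‖γ • F (xt (k - 2)) - γ • F (xt k)‖ ^ 2) +
      (3/16 : ℝ) * (1 / 16 * ‖xt (k - 1) - xt k‖ ^ 2 - ‖γ • F (xt (k - 1)) - γ • F (xt k)‖ ^ 2) +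
      (2 : ℝ) * ⟪γ • F xs, xt k - xs⟫ +
      (19/6 : ℝ) * ‖(1 : ℝ) • (x (k - 1)) + (-31/19 : ℝ) • (x k) + (201/304 : ℝ) • (x (k + 1)) + (-9/38 : ℝ) • (xt (k - 1)) + (63/304 : ℝ) • (xt k) + (-1 : ℝ) • (γ • F (xt (k - 1))) + (1 : ℝ) • (γ • F (x k))‖ ^ 2 +
      (11855/7296 : ℝ) * ‖(1 : ℝ) • (x k) + (4936/11855 : ℝ) • (x (k + 1)) + (-16659/23710 : ℝ) • (xt (k - 1)) + (-16923/23710 : ℝ) • (xt k) + (-5016/11855 : ℝ) • (γ • F (xt (k - 2))) + (5016/11855 : ℝ) • (γ • F (xt (k - 1))) + (10336/11855 : ℝ) • (γ • F (xt k)) + (-684/2371 : ℝ) • (γ • F (x k)) + (-6916/11855 : ℝ) • (γ • F (x (k + 1)))‖ ^ 2 +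
      (5804853/6069760 : ℝ) * ‖(1 : ℝ) • (x (k + 1)) + (495028/1934951 : ℝ) • (xt (k - 1)) + (-2429979/1934951 : ℝ) • (xt k) + (1547792/5804853 : ℝ) • (γ • F (xt (k - 2))) + (-7996912/5804853 : ℝ) • (γ • F (xt (k - 1))) + (150128/5804853 : ℝ) • (γ • F (xt k)) + (1153600/1934951 : ℝ) • (γ • F (x k)) + (946064/1934951 : ℝ) • (γ • F (x (k + 1)))‖ ^ 2 +
      (5/256 : ℝ) * ‖(1 : ℝ) • (xt (k - 2)) + (-6/5 : ℝ) • (xt (k - 1)) + (1/5 : ℝ) • (xt k)‖ ^ 2 +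
      (1508363003/4953474560 : ℝ) * ‖(1 : ℝ) • (xt (k - 1)) + (-1 : ℝ) • (xt k) + (142740880/215480429 : ℝ) • (γ • F (xt (k - 2))) + (-3058223760/1508363003 : ℝ) • (γ • F (xt (k - 1))) + (169156480/215480429 : ℝ) • (γ • F (xt k)) + (1361114040/1508363003 : ℝ) • (γ • F (x k)) + (-486171800/1508363003 : ℝ) • (γ • F (x (k + 1)))‖ ^ 2 +
      (2016851813/10343060592 : ℝ) * ‖(1 : ℝ) • (γ • F (xt (k - 2))) + (4407829730/2016851813 : ℝ) • (γ • F (xt (k - 1))) + (3847255169/2016851813 : ℝ) • (γ • F (xt k)) + (-5506495728/2016851813 : ℝ) • (γ • F (x k)) + (-4765440984/2016851813 : ℝ) • (γ • F (x (k + 1)))‖ ^ 2 +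
      (148680916801/169415552292 : ℝ) * ‖(1 : ℝ) • (γ • F (xt (k - 1))) + (-31853117919/25857550748 : ℝ) • (γ • F (xt k)) + (-524987182765/594723667204 : ℝ) • (γ • F (x k)) + (331442613849/297361833602 : ℝ) • (γ • F (x (k + 1)))‖ ^ 2 +
      (328172252219/1241162435904 : ℝ) * ‖(1 : ℝ) • (γ • F (xt k)) + (-711240567573/328172252219 : ℝ) • (γ • F (x k)) + (383068315354/328172252219 : ℝ) • (γ • F (x (k + 1)))‖ ^ 2 +
      (11424774170219/60383694408296 : ℝ) * ‖(1 : ℝ) • (γ • F (x k)) + (-1 : ℝ) • (γ • F (x (k + 1)))‖ ^ 2 := by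
    linarith [hproj_t1_x2, hproj_t1_x3, hproj_t1_t2, hproj_x2_x3, hproj_x2_t2, hproj_t2_x3, hproj_x3_x2, hproj_x3_t1, hproj_x3_t2, hproj_x3_s, nm (x k) (x (k + 1)), nm (x (k + 1)) (xt (k - 1)), nm (x (k + 1)) (xt k), nm (xt k) (xs), nl (x k) (xt (k - 1)), nl (x k) (xt k), nl (x (k + 1)) (xt (k - 1)), nl (x (k + 1)) (xt k), nl (xt (k - 2)) (xt (k - 1)), nl (xt (k - 2)) (xt k), nl (xt (k - 1)) (xt k), nv (xt k) m_t2, sq_nonneg ‖(1 : ℝ) • (x (k - 1)) + (-31/19 : ℝ) • (x k) + (201/304 : ℝ) • (x (k + 1)) + (-9/38 : ℝ) • (xt (k - 1)) + (63/304 : ℝ) • (xt k) + (-1 : ℝ) • (γ • F (xt (k - 1))) + (1 : ℝ) • (γ • F (x k))‖, sq_nonneg ‖(1 : ℝ) • (x k) + (4936/11855 : ℝ) • (x (k + 1)) + (-16659/23710 : ℝ) • (xt (k - 1)) + (-16923/23710 : ℝ) • (xt k) + (-5016/11855 : ℝ) • (γ • F (xt (k - 2))) + (5016/11855 : ℝ)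 • (γ • F (xt (k - 1))) + (10336/11855 : ℝ) • (γ • F (xt k)) + (-684/2371 : ℝ) • (γ • F (x k)) + (-6916/11855 : ℝ) • (γ • F (x (k + 1)))‖, sq_nonneg ‖(1 : ℝ) • (x (k + 1)) + (495028/1934951 : ℝ) • (xt (k - 1)) + (-2429979/1934951 : ℝ) • (xt k) + (1547792/5804853 : ℝ) • (γ • F (xt (k - 2))) + (-7996912/5804853 : ℝ) • (γ • F (xt (k - 1))) + (150128/5804853 : ℝ) • (γ • F (xt k)) + (1153600/1934951 : ℝ) • (γ • F (x k)) + (946064/1934951 : ℝ) • (γ • F (x (k + 1)))‖, sq_nonneg ‖(1 : ℝ) • (xt (k - 2)) + (-6/5 : ℝ) • (xt (k - 1)) + (1/5 : ℝ) • (xt k)‖, sq_nonneg ‖(1 : ℝ) • (xt (k - 1)) + (-1 : ℝ) • (xt k) + (142740880/215480429 : ℝ) • (γ • F (xt (k - 2))) + (-3058223760/1508363003 : ℝ) • (γ • F (xt (k - 1))) + (169156480/215480429 : ℝ) • (γ • F (xt k)) + (1361114040/1508363003 : ℝ) • (γ • F (x k)) + (-486171800/1508363003 : ℝ) • (γ •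 F (x (k + 1)))‖, sq_nonneg ‖(1 : ℝ) • (γ • F (xt (k - 2))) + (4407829730/2016851813 : ℝ) • (γ • F (xt (k - 1))) + (3847255169/2016851813 : ℝ) • (γ • F (xt k)) + (-5506495728/2016851813 : ℝ) • (γ • F (x k)) + (-4765440984/2016851813 : ℝ) • (γ • F (x (k + 1)))‖, sq_nonneg ‖(1 : ℝ) • (γ • F (xt (k - 1))) + (-31853117919/25857550748 : ℝ) • (γ • F (xt k)) + (-524987182765/594723667204 : ℝ) • (γ • F (x k)) + (331442613849/297361833602 : ℝ) • (γ • F (x (k + 1)))‖, sq_nonneg ‖(1 : ℝ) • (γ • F (xt k)) + (-711240567573/328172252219 : ℝ) • (γ • F (x k)) + (383068315354/328172252219 : ℝ) • (γ • F (x (k + 1)))‖, sq_nonneg ‖(1 : ℝ) • (γ • F (x k)) + (-1 : ℝ) • (γ • F (x (k + 1)))‖]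
  have hT2 : (0:ℝ) ≤
      (1/4 : ℝ) * ⟪x k - (x (k - 1) - γ • F (xt (k - 1))), x (k + 1) - x k⟫ +
      (1/4 : ℝ) * ⟪x k - (x (k - 1) - γ • F (xt (k - 1))), xt k - x k⟫ +
      (1/4 : ℝ) * ⟪xt k - (x k - γ • F (xt (k - 1))), x (k + 1) - xt k⟫ +
      (1/2 : ℝ) * ⟪x (k + 1) - (x k - γ • F (xt k)), x k - x (k + 1)⟫ +
      (1/2 : ℝ) * ⟪γ • F (x k) - γ • F (x (k + 1)), x k - x (k + 1)⟫ +
      (2 : ℝ) * (1 / 16 * ‖x (k + 1) - xt k‖ ^ 2 - ‖γ • F (x (k + 1)) - γ • F (xt k)‖ ^ 2) +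
      (1/2 : ℝ) * ‖(1/2 : ℝ) • (x (k - 1)) + (-1 : ℝ) • (x k) + (1/2 : ℝ) • (x (k + 1)) + (-1 : ℝ) • (γ • F (xt (k - 1))) + (1 : ℝ) • (γ • F (x k))‖ ^ 2 +
      (3/2 : ℝ) * ‖(-1 : ℝ) • (γ • F (xt k)) + (1 : ℝ) • (γ • F (x (k + 1)))‖ ^ 2 +
      (1/8 : ℝ) * ‖(1 : ℝ) • (x (k - 1)) + (-2 : ℝ) • (x k) + (1 : ℝ) • (xt k)‖ ^ 2 := by
    linarith [hproj_x2_x3, hproj_x2_t2, hproj_t2_x3, hproj_x3_x2, nm (x k) (x (k + 1)), nl (x (k + 1)) (xt k), sq_nonneg ‖(1/2 : ℝ) • (x (k - 1)) + (-1 : ℝ) • (x k) + (1/2 : ℝ) • (x (k + 1)) + (-1 : ℝ) • (γ • F (xt (k - 1))) + (1 : ℝ) • (γ • F (x k))‖, sq_nonneg ‖(-1 : ℝ) • (γ • F (xt k)) + (1 : ℝ) • (γ • F (x (k + 1)))‖, sq_nonneg ‖(1 : ℝ) • (x (k - 1)) + (-2 : ℝ) • (x k) + (1 : ℝ) • (xt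 k)‖]
  have key : (‖x k - xs‖ ^ 2 + (1 / 16) * ‖xt (k - 1) - xt (k - 2)‖ ^ 2 +
          ((3 * (k : ℝ) + 32) / 24) *
            (‖x k - x (k - 1)‖ ^ 2 +
              ‖x k - x (k - 1) - (2 * γ) • (F (x k) - F (xt (k - 1)))‖ ^ 2)) - (‖x (k + 1) - xs‖ ^ 2 + (1 / 16) * ‖xt k - xt (k - 1)‖ ^ 2 +
          ((3 * ((k : ℝ) + 1) + 32) / 24) *
            (‖x (k + 1) - x k‖ ^ 2 +
              ‖x (k + 1) - x k - (2 * γ) • (F (x (k + 1)) - F (xt k))‖ ^ 2)) =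
      ((11/8 : ℝ) * ⟪xt (k - 1) - (x (k - 1) - γ • F (xt (k - 2))), x k - xt (k - 1)⟫ +
      (1/16 : ℝ) * ⟪xt (k - 1) - (x (k - 1) - γ • F (xt (k - 2))), x (k + 1) - xt (k - 1)⟫ +
      (1/16 : ℝ) * ⟪xt (k - 1) - (x (k - 1) - γ • F (xt (k - 2))), xt k - xt (k - 1)⟫ +
      (33/8 : ℝ) * ⟪x k - (x (k - 1) - γ • F (xt (k - 1))), x (k + 1) - x k⟫ +
      (5/4 : ℝ) * ⟪x k - (x (k - 1) - γ • F (xt (k - 1))), xt k - x k⟫ +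
      (7/2 : ℝ) * ⟪xt k - (x k - γ • F (xt (k - 1))), x (k + 1) - xt k⟫ +
      (4 : ℝ) * ⟪x (k + 1) - (x k - γ • F (xt k)), x k - x (k + 1)⟫ +
      (3/2 : ℝ) * ⟪x (k + 1) - (x k - γ • F (xt k)), xt (k - 1) - x (k + 1)⟫ +
      (3/16 : ℝ) * ⟪x (k + 1) - (x k - γ • F (xt k)), xt k - x (k + 1)⟫ +
      (2 : ℝ) * ⟪x (k + 1) - (x k - γ • F (xt k)), xs - x (k + 1)⟫ +
      (79/16 : ℝ) * ⟪γ • F (x k) - γ • F (x (k + 1)), x k - x (k + 1)⟫ +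
      (11/8 : ℝ) * ⟪γ • F (x (k + 1)) - γ • F (xt (k - 1)), x (k + 1) - xt (k - 1)⟫ +
      (3/8 : ℝ) * ⟪γ • F (x (k + 1)) - γ • F (xt k), x (k + 1) - xt k⟫ +
      (2 : ℝ) * ⟪γ • F (xt k) - γ • F xs, xt k - xs⟫ +
      (5/16 : ℝ) * (1 / 16 * ‖x k - xt (k - 1)‖ ^ 2 - ‖γ • F (x k) - γ • F (xt (k - 1))‖ ^ 2) +
      (13/16 : ℝ) * (1 / 16 * ‖x k - xt k‖ ^ 2 - ‖γ • F (x k) - γ • F (xt k)‖ ^ 2) +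
      (7/8 : ℝ) * (1 / 16 * ‖x (k + 1) - xt (k - 1)‖ ^ 2 - ‖γ • F (x (k + 1)) - γ • F (xt (k - 1))‖ ^ 2) +
      (19/2 : ℝ) * (1 / 16 * ‖x (k + 1) - xt k‖ ^ 2 - ‖γ • F (x (k + 1)) - γ • F (xt k)‖ ^ 2) +
      (5/8 : ℝ) * (1 / 16 * ‖xt (k - 2) - xt (k - 1)‖ ^ 2 - ‖γ • F (xt (k - 2)) - γ • F (xt (k - 1))‖ ^ 2) +
      (1/16 : ℝ) * (1 / 16 * ‖xt (k - 2) - xt k‖ ^ 2 - ‖γ • F (xt (k - 2)) - γ • F (xt k)‖ ^ 2) +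
      (3/16 : ℝ) * (1 / 16 * ‖xt (k - 1) - xt k‖ ^ 2 - ‖γ • F (xt (k - 1)) - γ • F (xt k)‖ ^ 2) +
      (2 : ℝ) * ⟪γ • F xs, xt k - xs⟫ +
      (19/6 : ℝ) * ‖(1 : ℝ) • (x (k - 1)) + (-31/19 : ℝ) • (x k) + (201/304 : ℝ) • (x (k + 1)) + (-9/38 : ℝ) • (xt (k - 1)) + (63/304 : ℝ) • (xt k) + (-1 : ℝ) • (γ • F (xt (k - 1))) + (1 : ℝ) • (γ • F (x k))‖ ^ 2 +
      (11855/7296 : ℝ) * ‖(1 : ℝ) • (x k) + (4936/11855 : ℝ) • (x (k + 1)) + (-16659/23710 : ℝ) • (xt (k - 1)) + (-16923/23710 : ℝ) • (xt k) + (-5016/11855 : ℝ) • (γ • F (xt (k - 2))) + (5016/11855 : ℝ) • (γ • F (xt (k - 1))) + (10336/11855 : ℝ) • (γ • F (xt k)) + (-684/2371 : ℝ) • (γ • F (x k)) + (-6916/11855 : ℝ) • (γ • F (x (k + 1)))‖ ^ 2 +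
      (5804853/6069760 : ℝ) * ‖(1 : ℝ) • (x (k + 1)) + (495028/1934951 : ℝ) • (xt (k - 1)) + (-2429979/1934951 : ℝ) • (xt k) + (1547792/5804853 : ℝ) • (γ • F (xt (k - 2))) + (-7996912/5804853 : ℝ) • (γ • F (xt (k - 1))) + (150128/5804853 : ℝ) • (γ • F (xt k)) + (1153600/1934951 : ℝ) • (γ • F (x k)) + (946064/1934951 : ℝ) • (γ • F (x (k + 1)))‖ ^ 2 +
      (5/256 : ℝ) * ‖(1 : ℝ) • (xt (k - 2)) + (-6/5 : ℝ) • (xt (k - 1)) + (1/5 : ℝ) • (xt k)‖ ^ 2 +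
      (1508363003/4953474560 : ℝ) * ‖(1 : ℝ) • (xt (k - 1)) + (-1 : ℝ) • (xt k) + (142740880/215480429 : ℝ) • (γ • F (xt (k - 2))) + (-3058223760/1508363003 : ℝ) • (γ • F (xt (k - 1))) + (169156480/215480429 : ℝ) • (γ • F (xt k)) + (1361114040/1508363003 : ℝ) • (γ • F (x k)) + (-486171800/1508363003 : ℝ) • (γ • F (x (k + 1)))‖ ^ 2 +
      (2016851813/10343060592 : ℝ) * ‖(1 : ℝ) • (γ • F (xt (k - 2))) + (4407829730/2016851813 : ℝ) • (γ • F (xt (k - 1))) + (3847255169/2016851813 : ℝ) • (γ • F (xt k)) + (-5506495728/2016851813 : ℝ) • (γ • F (x k)) + (-4765440984/2016851813 : ℝ) • (γ • F (x (k + 1)))‖ ^ 2 +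
      (148680916801/169415552292 : ℝ) * ‖(1 : ℝ) • (γ • F (xt (k - 1))) + (-31853117919/25857550748 : ℝ) • (γ • F (xt k)) + (-524987182765/594723667204 : ℝ) • (γ • F (x k)) + (331442613849/297361833602 : ℝ) • (γ • F (x (k + 1)))‖ ^ 2 +
      (328172252219/1241162435904 : ℝ) * ‖(1 : ℝ) • (γ • F (xt k)) + (-711240567573/328172252219 : ℝ) • (γ • F (x k)) + (383068315354/328172252219 : ℝ) • (γ • F (x (k + 1)))‖ ^ 2 +
      (11424774170219/60383694408296 : ℝ) * ‖(1 : ℝ) • (γ • F (x k)) + (-1 : ℝ) • (γ • F (x (k + 1)))‖ ^ 2) + ((k : ℝ) - 2) * ((1/4 : ℝ) * ⟪x k - (x (k - 1) - γ • F (xt (k - 1))), x (k + 1) - x k⟫ +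
      (1/4 : ℝ) * ⟪x k - (x (k - 1) - γ • F (xt (k - 1))), xt k - x k⟫ +
      (1/4 : ℝ) * ⟪xt k - (x k - γ • F (xt (k - 1))), x (k + 1) - xt k⟫ +
      (1/2 : ℝ) * ⟪x (k + 1) - (x k - γ • F (xt k)), x k - x (k + 1)⟫ +
      (1/2 : ℝ) * ⟪γ • F (x k) - γ • F (x (k + 1)), x k - x (k + 1)⟫ +
      (2 : ℝ) * (1 / 16 * ‖x (k + 1) - xt k‖ ^ 2 - ‖γ • F (x (k + 1)) - γ • F (xt k)‖ ^ 2) +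
      (1/2 : ℝ) * ‖(1/2 : ℝ) • (x (k - 1)) + (-1 : ℝ) • (x k) + (1/2 : ℝ) • (x (k + 1)) + (-1 : ℝ) • (γ • F (xt (k - 1))) + (1 : ℝ) • (γ • F (x k))‖ ^ 2 +
      (3/2 : ℝ) * ‖(-1 : ℝ) • (γ • F (xt k)) + (1 : ℝ) • (γ • F (x (k + 1)))‖ ^ 2 +
      (1/8 : ℝ) * ‖(1 : ℝ) • (x (k - 1)) + (-2 : ℝ) • (x k) + (1 : ℝ) • (xt k)‖ ^ 2) := by
    simp only [← real_inner_self_eq_norm_sq, inner_sub_left, inner_sub_right, inner_add_left,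
      inner_add_right, real_inner_smul_left, real_inner_smul_right]
    simp only [real_inner_comm (x (k - 1)) (x k),
    real_inner_comm (x (k - 1)) (x (k + 1)),
    real_inner_comm (x (k - 1)) (xt (k - 2)),
    real_inner_comm (x (k - 1)) (xt (k - 1)),
    real_inner_comm (x (k - 1)) (xt k),
    real_inner_comm (x (k - 1)) (xs),
    real_inner_comm (x (k - 1)) (F (xt (k - 2))),
    real_inner_comm (x (k - 1)) (F (xt (k - 1))),
    real_inner_comm (x (k - 1)) (F (xt k)),
    real_inner_comm (x (k - 1)) (F (x k)),
    real_inner_comm (x (k - 1)) (F (x (k + 1))),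
    real_inner_comm (x (k - 1)) (F xs),
    real_inner_comm (x k) (x (k + 1)),
    real_inner_comm (x k) (xt (k - 2)),
    real_inner_comm (x k) (xt (k - 1)),
    real_inner_comm (x k) (xt k),
    real_inner_comm (x k) (xs),
    real_inner_comm (x k) (F (xt (k - 2))),
    real_inner_comm (x k) (F (xt (k - 1))),
    real_inner_comm (x k) (F (xt k)),
    real_inner_comm (x k) (F (x k)),
    real_inner_comm (x k) (F (x (k + 1))),
    real_inner_comm (x k) (F xs),
    real_inner_comm (x (k + 1)) (xt (k - 2)),
    real_inner_comm (x (k + 1)) (xt (k - 1)),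
    real_inner_comm (x (k + 1)) (xt k),
    real_inner_comm (x (k + 1)) (xs),
    real_inner_comm (x (k + 1)) (F (xt (k - 2))),
    real_inner_comm (x (k + 1)) (F (xt (k - 1))),
    real_inner_comm (x (k + 1)) (F (xt k)),
    real_inner_comm (x (k + 1)) (F (x k)),
    real_inner_comm (x (k + 1)) (F (x (k + 1))),
    real_inner_comm (x (k + 1)) (F xs),
    real_inner_comm (xt (k - 2)) (xt (k - 1)),
    real_inner_comm (xt (k - 2)) (xt k),
    real_inner_comm (xt (k - 2)) (xs),
    real_inner_comm (xt (k - 2)) (F (xt (k - 2))),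
    real_inner_comm (xt (k - 2)) (F (xt (k - 1))),
    real_inner_comm (xt (k - 2)) (F (xt k)),
    real_inner_comm (xt (k - 2)) (F (x k)),
    real_inner_comm (xt (k - 2)) (F (x (k + 1))),
    real_inner_comm (xt (k - 2)) (F xs),
    real_inner_comm (xt (k - 1)) (xt k),
    real_inner_comm (xt (k - 1)) (xs),
    real_inner_comm (xt (k - 1)) (F (xt (k - 2))),
    real_inner_comm (xt (k - 1)) (F (xt (k - 1))),
    real_inner_comm (xt (k - 1)) (F (xt k)),
    real_inner_comm (xt (k - 1)) (F (x k)),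
    real_inner_comm (xt (k - 1)) (F (x (k + 1))),
    real_inner_comm (xt (k - 1)) (F xs),
    real_inner_comm (xt k) (xs),
    real_inner_comm (xt k) (F (xt (k - 2))),
    real_inner_comm (xt k) (F (xt (k - 1))),
    real_inner_comm (xt k) (F (xt k)),
    real_inner_comm (xt k) (F (x k)),
    real_inner_comm (xt k) (F (x (k + 1))),
    real_inner_comm (xt k) (F xs),
    real_inner_comm (xs) (F (xt (k - 2))),
    real_inner_comm (xs) (F (xt (k - 1))),
    real_inner_comm (xs) (F (xt k)),
    real_inner_comm (xs) (F (x k)),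
    real_inner_comm (xs) (F (x (k + 1))),
    real_inner_comm (xs) (F xs),
    real_inner_comm (F (xt (k - 2))) (F (xt (k - 1))),
    real_inner_comm (F (xt (k - 2))) (F (xt k)),
    real_inner_comm (F (xt (k - 2))) (F (x k)),
    real_inner_comm (F (xt (k - 2))) (F (x (k + 1))),
    real_inner_comm (F (xt (k - 2))) (F xs),
    real_inner_comm (F (xt (k - 1))) (F (xt k)),
    real_inner_comm (F (xt (k - 1))) (F (x k)),
    real_inner_comm (F (xt (k - 1))) (F (x (k + 1))),
    real_inner_comm (F (xt (k - 1))) (F xs),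
    real_inner_comm (F (xt k)) (F (x k)),
    real_inner_comm (F (xt k)) (F (x (k + 1))),
    real_inner_comm (F (xt k)) (F xs),
    real_inner_comm (F (x k)) (F (x (k + 1))),
    real_inner_comm (F (x k)) (F xs),
    real_inner_comm (F (x (k + 1))) (F xs)]
    ring
  have hKT2 : (0:ℝ) ≤ ((k : ℝ) - 2) * ((1/4 : ℝ) * ⟪x k - (x (k - 1) - γ • F (xt (k - 1))), x (k + 1) - x k⟫ +
      (1/4 : ℝ) * ⟪x k - (x (k - 1) - γ • F (xt (k - 1))), xt k - x k⟫ +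
      (1/4 : ℝ) * ⟪xt k - (x k - γ • F (xt (k - 1))), x (k + 1) - xt k⟫ +
      (1/2 : ℝ) * ⟪x (k + 1) - (x k - γ • F (xt k)), x k - x (k + 1)⟫ +
      (1/2 : ℝ) * ⟪γ • F (x k) - γ • F (x (k + 1)), x k - x (k + 1)⟫ +
      (2 : ℝ) * (1 / 16 * ‖x (k + 1) - xt k‖ ^ 2 - ‖γ • F (x (k + 1)) - γ • F (xt k)‖ ^ 2) +
      (1/2 : ℝ) * ‖(1/2 : ℝ) • (x (k - 1)) + (-1 : ℝ) • (x k) + (1/2 : ℝ) • (x (k + 1)) + (-1 : ℝ) • (γ • F (xt (k - 1))) + (1 : ℝ) • (γ • F (x k))‖ ^ 2 +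
      (3/2 : ℝ) * ‖(-1 : ℝ) • (γ • F (xt k)) + (1 : ℝ) • (γ • F (x (k + 1)))‖ ^ 2 +
      (1/8 : ℝ) * ‖(1 : ℝ) • (x (k - 1)) + (-2 : ℝ) • (x k) + (1 : ℝ) • (xt k)‖ ^ 2) :=
    mul_nonneg (by linarith) hT2
  linarith [key, hT1, hKT2]
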